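/- Let X be a real n×2n matrix with X·R·Xᵀ = 0 and Δ_I(X) ≥ 0 for every n-element subset I of {1,…,2n}, let a > 0, and let i ∈ {1,…,2n}. Set Y = X·x_i(a)·y_{i+n}(a), with the index i+n taken modulo 2n with representative in {1,…,2n}. Then Y·R·Yᵀ = 0 and Δ_I(Y) ≥ 0 for every n-element subset I of {1,…,2n}. -/

import Mathlib

open Matrix

/-- `Δ_I(X)`: the determinant of the `n × n` submatrix of the `n × 2n` matrix `X`
formed by the columns indexed by `I` (taken in increasing order); `0` if `I.card ≠ n`. -/
noncomputable def Delta {n : ℕ} (X : Matrix (Fin n) (Fin (2*n)) ℝ)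
    (I : Finset (Fin (2*n))) : ℝ :=
  if h : I.card = n then
    (X.submatrix id (fun j : Fin n => ((I.orderIsoOfFin h j : Fin (2*n))))).det
  else 0

/-- The Gram matrix of the form `R(x,y) = Σ_{i=1}^n (−1)^{i−1}(x_i y_{n+i} − x_{n+i} y_i)`,
with `0`-based indices. -/
def Rmat (n : ℕ) : Matrix (Fin (2*n)) (Fin (2*n)) ℝ := fun i j =>
  if (j : ℕ) = (i : ℕ) + n then (-1 : ℝ) ^ (i : ℕ)
  else if (i : ℕ) = (j : ℕ) + n then -(-1 : ℝ) ^ (j : ℕ)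
  else 0

/-- Rotation of indices by `n` modulo `2n`. -/
def rotIdx (n : ℕ) (i : Fin (2*n)) : Fin (2*n) :=
  ⟨((i : ℕ) + n) % (2*n), Nat.mod_lt _ (Nat.lt_of_le_of_lt (Nat.zero_le _) i.isLt)⟩

/-- `x_i(a)` (0-based index `i`): the identity matrix with an extra entry `a` in
position `(i, i+1)` for `i < 2n−1`, and with extra entry `(−1)^{n−1}a` in position
`(2n−1, 0)` for `i = 2n−1`. -/
def xMat (n : ℕ) (i : Fin (2*n)) (a : ℝ) : Matrix (Fin (2*n)) (Fin (2*n)) ℝ :=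
  fun r c =>
    (if r = c then 1 else 0) +
    (if (i : ℕ) + 1 < 2*n then
      (if (r : ℕ) = (i : ℕ) ∧ (c : ℕ) = (i : ℕ) + 1 then a else 0)
    else
      (if (r : ℕ) = (i : ℕ) ∧ (c : ℕ) = 0 then (-1 : ℝ) ^ (n - 1) * a else 0))

/-- `y_i(a)` (0-based index `i`): the identity matrix with an extra entry `a` in
position `(i+1, i)` for `i < 2n−1`, and with extra entry `(−1)^{n−1}a` in position
`(0, 2n−1)` for `i = 2n−1`. -/
def yMat (n : ℕ) (i : Fin (2*n)) (a : ℝ) : Matrix (Fin (2*n)) (Fin (2*n)) ℝ :=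
  fun r c =>
    (if r = c then 1 else 0) +
    (if (i : ℕ) + 1 < 2*n then
      (if (r : ℕ) = (i : ℕ) + 1 ∧ (c : ℕ) = (i : ℕ) then a else 0)
    else
      (if (r : ℕ) = 0 ∧ (c : ℕ) = (i : ℕ) then (-1 : ℝ) ^ (n - 1) * a else 0))

/-- next index, cyclically -/
def nxt (n : ℕ) (i : Fin (2*n)) : Fin (2*n) :=
  ⟨if (i : ℕ) + 1 < 2*n then (i : ℕ) + 1 else 0, by have := i.isLt; split <;> omega⟩

def xcoef (n : ℕ) (i : Fin (2*n)) (a : ℝ) : ℝ :=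
  if (i : ℕ) + 1 < 2*n then a else (-1 : ℝ) ^ (n - 1) * a

lemma xMat_eq (n : ℕ) (i : Fin (2*n)) (a : ℝ) :
    xMat n i a = 1 + Matrix.single i (nxt n i) (xcoef n i a) := by
  ext r c
  simp only [xMat, Matrix.add_apply, Matrix.one_apply, Matrix.single, of_apply, xcoef, nxt]
  congr 1
  by_cases h : (i : ℕ) + 1 < 2*n <;>
    simp only [h, if_true, if_false, Fin.ext_iff] <;>
    · apply if_congr _ rfl rfl
      constructor <;> (rintro ⟨h1, h2⟩; constructor <;> simp_all <;> omega)

lemma yMat_eq (n : ℕ) (i : Fin (2*n)) (a : ℝ) :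
    yMat n i a = 1 + Matrix.single (nxt n i) i (xcoef n i a) := by
  ext r c
  simp only [yMat, Matrix.add_apply, Matrix.one_apply, Matrix.single, of_apply, xcoef, nxt]
  congr 1
  by_cases h : (i : ℕ) + 1 < 2*n <;>
    simp only [h, if_true, if_false, Fin.ext_iff] <;>
    · apply if_congr _ rfl rfl
      constructor <;> (rintro ⟨h1, h2⟩; constructor <;> simp_all <;> omega)

lemma mul_one_add_std {m N : ℕ} (Z : Matrix (Fin m) (Fin N) ℝ) (s t : Fin N) (c : ℝ) :
    Z * (1 + Matrix.single s t c) = Z.updateCol t (fun r => Z r t + c * Z r s) := by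
  ext r q
  rw [Matrix.mul_apply, Matrix.updateCol_apply]
  have : ∀ k : Fin N, Z r k * (1 + Matrix.single s t c) k q
      = (if q = k then Z r k else 0) + (if k = s ∧ q = t then Z r s * c else 0) := by
    intro k
    simp only [Matrix.add_apply, Matrix.one_apply, Matrix.single, of_apply, mul_add]
    congr 1
    · by_cases h : k = q
      · simp [h]
      · rw [if_neg h, mul_zero, if_neg (Ne.symm h)]
    · by_cases h : s = k ∧ t = q
      · obtain ⟨rfl, rfl⟩ := h
        simp [mul_comm]
      · rw [if_neg h, mul_zero, if_neg (fun hc => h ⟨hc.1.symm, hc.2.symm⟩)]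
  rw [Finset.sum_congr rfl (fun k _ => this k)]
  rw [Finset.sum_add_distrib, Finset.sum_ite_eq]
  have h2 : ∑ x : Fin N, (if x = s ∧ q = t then Z r s * c else 0)
      = if q = t then Z r s * c else 0 := by
    by_cases hq : q = t
    · simp only [hq, and_true]
      rw [Finset.sum_ite_eq']
      simp
    · simp [hq]
  rw [h2]
  by_cases hq : q = t <;> simp [hq] <;> ring
lemma rot_spec (n : ℕ) (hn : 0 < n) (i : Fin (2*n)) :
    ((i:ℕ) < n ∧ (rotIdx n i : ℕ) = (i:ℕ) + n) ∨
    (n ≤ (i:ℕ) ∧ (rotIdx n i : ℕ) = (i:ℕ) - n) := by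
  have hi := i.isLt
  by_cases h : (i:ℕ) < n
  · left
    refine ⟨h, ?_⟩
    simp only [rotIdx]
    exact Nat.mod_eq_of_lt (by omega)
  · right
    refine ⟨by omega, ?_⟩
    simp only [rotIdx]
    rw [Nat.mod_eq_sub_mod (by omega), Nat.mod_eq_of_lt (by omega)]
    omega

lemma nxt_spec (n : ℕ) (i : Fin (2*n)) :
    ((i:ℕ) + 1 < 2*n ∧ (nxt n i : ℕ) = (i:ℕ) + 1) ∨
    ((i:ℕ) + 1 = 2*n ∧ (nxt n i : ℕ) = 0) := by
  have hi := i.isLt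
  by_cases h : (i:ℕ) + 1 < 2*n
  · left; exact ⟨h, by simp [nxt, h]⟩
  · right; exact ⟨by omega, by simp [nxt, h]⟩

lemma Rmat_zero {n : ℕ} {p q : Fin (2*n)} (h1 : (q:ℕ) ≠ (p:ℕ) + n)
    (h2 : (p:ℕ) ≠ (q:ℕ) + n) : Rmat n p q = 0 := by
  simp [Rmat, h1, h2]

lemma Rmat_val1 {n : ℕ} {p q : Fin (2*n)} (h : (q:ℕ) = (p:ℕ) + n) :
    Rmat n p q = (-1)^(p:ℕ) := by simp [Rmat, h]

lemma Rmat_val2 {n : ℕ} (hn : 0 < n) {p q : Fin (2*n)} (h : (p:ℕ) = (q:ℕ) + n) :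
    Rmat n p q = -(-1)^(q:ℕ) := by
  have hne : (q:ℕ) ≠ (p:ℕ) + n := by omega
  simp only [Rmat]
  rw [if_neg hne, if_pos h]

lemma std_R_std {N : ℕ} (M : Matrix (Fin N) (Fin N) ℝ) (r s u v : Fin N) (c d : ℝ)
    (h : M s u = 0) :
    Matrix.single r s c * M * Matrix.single u v d = 0 := by
  ext p q
  by_cases hq : q = v
  · subst hq
    rw [Matrix.mul_single_apply_same]
    by_cases hp : p = r
    · subst hp
      rw [Matrix.single_mul_apply_same, h, mul_zero, zero_mul, Matrix.zero_apply]
    · rw [Matrix.single_mul_apply_of_ne _ _ _ _ _ hp, zero_mul, Matrix.zero_apply]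
  · rw [Matrix.mul_single_apply_of_ne _ _ _ _ _ hq, Matrix.zero_apply]

lemma corr {n : ℕ} (hn : 0 < n) (i s₁ j s₂ : Fin (2*n)) (c₁ c₂ : ℝ)
    (hj : (j:ℕ) = (i:ℕ) + n ∨ (j:ℕ) + n = (i:ℕ))
    (hs : (s₂:ℕ) = (s₁:ℕ) + n ∨ (s₂:ℕ) + n = (s₁:ℕ))
    (hsign : c₁ * Rmat n s₁ s₂ + Rmat n i j * c₂ = 0) :
    Matrix.single i s₁ c₁ * Rmat n + Rmat n * Matrix.single j s₂ c₂ = 0 := by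
  ext p q
  rw [Matrix.add_apply, Matrix.zero_apply]
  have hi := i.isLt
  have hs1 := s₁.isLt
  have hs2 := s₂.isLt
  have hq' := q.isLt
  have hp' := p.isLt
  by_cases hp : p = i
  · subst hp
    rw [Matrix.single_mul_apply_same]
    by_cases hq : q = s₂
    · subst hq
      rw [Matrix.mul_single_apply_same]
      exact hsign
    · rw [Matrix.mul_single_apply_of_ne _ _ _ _ _ hq]
      have hqv : (q:ℕ) ≠ (s₂:ℕ) := fun h => hq (Fin.ext h)
      rw [Rmat_zero (by omega) (by omega), mul_zero, add_zero]
  · rw [Matrix.single_mul_apply_of_ne _ _ _ _ _ hp]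
    by_cases hq : q = s₂
    · subst hq
      rw [Matrix.mul_single_apply_same]
      have hpv : (p:ℕ) ≠ (i:ℕ) := fun h => hp (Fin.ext h)
      rw [Rmat_zero (by omega) (by omega), zero_mul, zero_add]
    · rw [Matrix.mul_single_apply_of_ne _ _ _ _ _ hq, add_zero]

lemma transpose_std {N : ℕ} (r s : Fin N) (c : ℝ) :
    (Matrix.single r s c)ᵀ = Matrix.single s r c := by
  ext p q
  simp only [Matrix.transpose_apply, Matrix.single, of_apply]
  exact if_congr and_comm rfl rfl

lemma xRy (n : ℕ) (hn : 0 < n) (i : Fin (2*n)) (a : ℝ) :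
    xMat n i a * Rmat n * (yMat n (rotIdx n i) a)ᵀ = Rmat n := by
  have hi := i.isLt
  obtain ⟨hri, hrv⟩ | ⟨hri, hrv⟩ := rot_spec n hn i <;>
  obtain ⟨hni, hnv⟩ | ⟨hni, hnv⟩ := nxt_spec n i <;>
  obtain ⟨hmi, hmv⟩ | ⟨hmi, hmv⟩ := nxt_spec n (rotIdx n i) <;>
  · rw [xMat_eq, yMat_eq, transpose_add, transpose_one, transpose_std]
    have hzero : Matrix.single i (nxt n i) (xcoef n i a) * Rmat n *
        Matrix.single (rotIdx n i) (nxt n (rotIdx n i)) (xcoef n (rotIdx n i) a) = 0 :=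
      std_R_std _ _ _ _ _ _ _ (Rmat_zero (by omega) (by omega))
    have hcorr : Matrix.single i (nxt n i) (xcoef n i a) * Rmat n +
        Rmat n * Matrix.single (rotIdx n i) (nxt n (rotIdx n i)) (xcoef n (rotIdx n i) a) = 0 := by
      refine corr hn _ _ _ _ _ _ (by omega) (by omega) ?_
      have e1 : xcoef n i a = if (i : ℕ) + 1 < 2*n then a else (-1 : ℝ) ^ (n - 1) * a := rfl
      have e2 : xcoef n (rotIdx n i) a =
          if (rotIdx n i : ℕ) + 1 < 2*n then a else (-1 : ℝ) ^ (n - 1) * a := rfl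
      first
      | (rw [Rmat_val1 (p := nxt n i) (by omega), Rmat_val1 (p := i) (by omega)])
      | (rw [Rmat_val1 (p := nxt n i) (by omega), Rmat_val2 hn (q := rotIdx n i) (by omega)])
      | (rw [Rmat_val2 hn (q := nxt n (rotIdx n i)) (by omega), Rmat_val1 (p := i) (by omega)])
      | (rw [Rmat_val2 hn (q := nxt n (rotIdx n i)) (by omega), Rmat_val2 hn (q := rotIdx n i) (by omega)])
      first
      | (exfalso; omega)
      | (rw [e1, if_pos hni, e2, if_pos (by omega), hnv, pow_succ]; ring)
      | (rw [e1, if_pos hni, e2, if_pos (by omega), hmv, hrv, pow_succ]; ring)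
      | (rw [e1, if_neg (by omega), e2, if_pos (by omega), hnv, pow_zero, hrv]
         have hin : (i:ℕ) - n = n - 1 := by omega
         rw [hin]; ring)
      | (rw [e1, if_pos hni, e2, if_neg (by omega), hmv, pow_zero]
         have hie : (i:ℕ) = n - 1 := by omega
         have hsq : (-1:ℝ)^(n-1) * (-1:ℝ)^(n-1) = 1 := by
           rw [← pow_add]; exact Even.neg_one_pow ⟨n-1, rfl⟩
         rw [hie]; linear_combination a * hsq)
    calc (1 + Matrix.single i (nxt n i) (xcoef n i a)) * Rmat n *
          (1 + Matrix.single (rotIdx n i) (nxt n (rotIdx n i)) (xcoef n (rotIdx n i) a))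
        = Rmat n + ((Matrix.single i (nxt n i) (xcoef n i a)) * Rmat n +
            Rmat n * Matrix.single (rotIdx n i) (nxt n (rotIdx n i)) (xcoef n (rotIdx n i) a)) +
            (Matrix.single i (nxt n i) (xcoef n i a)) * Rmat n *
            Matrix.single (rotIdx n i) (nxt n (rotIdx n i)) (xcoef n (rotIdx n i) a) := by
          noncomm_ring
      _ = Rmat n := by rw [hzero, hcorr, add_zero, add_zero]

lemma Rmat_transpose (n : ℕ) : (Rmat n)ᵀ = -Rmat n := by
  ext p q
  have hp := p.isLt
  have hq := q.isLt
  simp only [Matrix.transpose_apply, Matrix.neg_apply, Rmat]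
  by_cases h2 : (q:ℕ) = (p:ℕ) + n
  · rw [if_neg (by omega), if_pos h2, if_pos h2]
  · by_cases h1 : (p:ℕ) = (q:ℕ) + n
    · rw [if_pos h1, if_neg h2, if_pos h1, neg_neg]
    · rw [if_neg h1, if_neg h2, if_neg h2, if_neg h1, neg_zero]

lemma yRx (n : ℕ) (hn : 0 < n) (i : Fin (2*n)) (a : ℝ) :
    yMat n (rotIdx n i) a * Rmat n * (xMat n i a)ᵀ = Rmat n := by
  have h := congrArg Matrix.transpose (xRy n hn i a)
  rw [Matrix.transpose_mul, Matrix.transpose_mul, Matrix.transpose_transpose,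
    Rmat_transpose] at h
  have h2 : yMat n (rotIdx n i) a * Rmat n * (xMat n i a)ᵀ
      = -(yMat n (rotIdx n i) a * -Rmat n * (xMat n i a)ᵀ) := by noncomm_ring
  rw [h2]
  rw [show yMat n (rotIdx n i) a * -Rmat n * (xMat n i a)ᵀ
      = yMat n (rotIdx n i) a * (-Rmat n * (xMat n i a)ᵀ) from by noncomm_ring, h, neg_neg]

lemma xy_comm (n : ℕ) (hn : 0 < n) (i : Fin (2*n)) (a : ℝ) :
    xMat n i a * yMat n (rotIdx n i) a = yMat n (rotIdx n i) a * xMat n i a := by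
  have hi := i.isLt
  obtain ⟨hri, hrv⟩ | ⟨hri, hrv⟩ := rot_spec n hn i <;>
  obtain ⟨hni, hnv⟩ | ⟨hni, hnv⟩ := nxt_spec n i <;>
  obtain ⟨hmi, hmv⟩ | ⟨hmi, hmv⟩ := nxt_spec n (rotIdx n i) <;>
  · rw [xMat_eq, yMat_eq]
    have hne1 : nxt n i ≠ nxt n (rotIdx n i) := by
      intro h; have hv := congrArg Fin.val h; rw [hnv, hmv] at hv; omega
    have hne2 : rotIdx n i ≠ i := by
      intro h; have hv := congrArg Fin.val h; rw [hrv] at hv; omega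
    have h1 : Matrix.single i (nxt n i) (xcoef n i a) *
        Matrix.single (nxt n (rotIdx n i)) (rotIdx n i) (xcoef n (rotIdx n i) a) = 0 :=
      Matrix.single_mul_single_of_ne _ _ _ _ hne1 _
    have h2 : Matrix.single (nxt n (rotIdx n i)) (rotIdx n i) (xcoef n (rotIdx n i) a) *
        Matrix.single i (nxt n i) (xcoef n i a) = 0 :=
      Matrix.single_mul_single_of_ne _ _ _ _ hne2 _
    calc (1 + Matrix.single i (nxt n i) (xcoef n i a)) *
          (1 + Matrix.single (nxt n (rotIdx n i)) (rotIdx n i) (xcoef n (rotIdx n i) a))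
        = 1 + Matrix.single i (nxt n i) (xcoef n i a) +
          Matrix.single (nxt n (rotIdx n i)) (rotIdx n i) (xcoef n (rotIdx n i) a) +
          Matrix.single i (nxt n i) (xcoef n i a) *
          Matrix.single (nxt n (rotIdx n i)) (rotIdx n i) (xcoef n (rotIdx n i) a) := by
          noncomm_ring
      _ = 1 + Matrix.single i (nxt n i) (xcoef n i a) +
          Matrix.single (nxt n (rotIdx n i)) (rotIdx n i) (xcoef n (rotIdx n i) a) +
          Matrix.single (nxt n (rotIdx n i)) (rotIdx n i) (xcoef n (rotIdx n i) a) *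
          Matrix.single i (nxt n i) (xcoef n i a) := by rw [h1, h2]
      _ = (1 + Matrix.single (nxt n (rotIdx n i)) (rotIdx n i) (xcoef n (rotIdx n i) a)) *
          (1 + Matrix.single i (nxt n i) (xcoef n i a)) := by noncomm_ring

lemma symp (n : ℕ) (hn : 0 < n) (X : Matrix (Fin n) (Fin (2*n)) ℝ)
    (hlag : X * Rmat n * Xᵀ = 0) (i : Fin (2*n)) (a : ℝ) :
    (X * xMat n i a * yMat n (rotIdx n i) a) * Rmat n *
      (X * xMat n i a * yMat n (rotIdx n i) a)ᵀ = 0 := by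
  have key : xMat n i a * (yMat n (rotIdx n i) a * (Rmat n *
      ((yMat n (rotIdx n i) a)ᵀ * (xMat n i a)ᵀ))) = Rmat n := by
    calc xMat n i a * (yMat n (rotIdx n i) a * (Rmat n *
          ((yMat n (rotIdx n i) a)ᵀ * (xMat n i a)ᵀ)))
        = (xMat n i a * yMat n (rotIdx n i) a) * (Rmat n *
          ((yMat n (rotIdx n i) a)ᵀ * (xMat n i a)ᵀ)) := by noncomm_ring
      _ = (yMat n (rotIdx n i) a * xMat n i a) * (Rmat n *
          ((yMat n (rotIdx n i) a)ᵀ * (xMat n i a)ᵀ)) := by rw [xy_comm n hn]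
      _ = yMat n (rotIdx n i) a * (xMat n i a * Rmat n * (yMat n (rotIdx n i) a)ᵀ *
          (xMat n i a)ᵀ) := by noncomm_ring
      _ = yMat n (rotIdx n i) a * (Rmat n * (xMat n i a)ᵀ) := by rw [xRy n hn]
      _ = yMat n (rotIdx n i) a * Rmat n * (xMat n i a)ᵀ := by noncomm_ring
      _ = Rmat n := yRx n hn i a
  have expand : (X * xMat n i a * yMat n (rotIdx n i) a) * Rmat n *
      (X * xMat n i a * yMat n (rotIdx n i) a)ᵀ
      = X * ((xMat n i a * (yMat n (rotIdx n i) a * (Rmat n *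
        ((yMat n (rotIdx n i) a)ᵀ * (xMat n i a)ᵀ)))) * Xᵀ) := by
    simp only [Matrix.transpose_mul, Matrix.mul_assoc]
  rw [expand, key, ← Matrix.mul_assoc, hlag]

section Minors
variable {n : ℕ}

lemma Delta_eq (Z : Matrix (Fin n) (Fin (2*n)) ℝ) (I : Finset (Fin (2*n))) (hI : I.card = n) :
    Delta Z I = (Z.submatrix id (fun j => I.orderEmbOfFin hI j)).det := by
  rw [Delta, dif_pos hI]
  simp only [Finset.coe_orderIsoOfFin_apply]

lemma card_insert_erase {I : Finset (Fin (2*n))} (hI : I.card = n) {s t : Fin (2*n)}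
    (ht : t ∈ I) (hs : s ∉ I) : (insert s (I.erase t)).card = n := by
  have hn : 0 < n := hI ▸ Finset.card_pos.2 ⟨t, ht⟩
  rw [Finset.card_insert_of_notMem (fun hmem => hs (Finset.mem_of_mem_erase hmem)),
    Finset.card_erase_of_mem ht, hI]
  omega

lemma d1 (Z : Matrix (Fin n) (Fin (2*n)) ℝ) (t : Fin (2*n)) (f : Fin n → ℝ)
    (I : Finset (Fin (2*n))) (hI : I.card = n) (ht : t ∉ I) :
    Delta (Z.updateCol t f) I = Delta Z I := by
  rw [Delta_eq _ _ hI, Delta_eq _ _ hI]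
  congr 1
  ext r j
  rw [Matrix.submatrix_apply, Matrix.submatrix_apply, Matrix.updateCol_apply,
    if_neg (fun h => ht (by rw [← h]; exact Finset.orderEmbOfFin_mem I hI j))]

lemma d3 (Z : Matrix (Fin n) (Fin (2*n)) ℝ) (s t : Fin (2*n)) (c : ℝ)
    (I : Finset (Fin (2*n))) (hI : I.card = n) (ht : t ∈ I) :
    Delta (Z.updateCol t (fun r => Z r t + c * Z r s)) I
      = Delta Z I + c * (Z.submatrix id (fun j =>
          if I.orderEmbOfFin hI j = t then s else I.orderEmbOfFin hI j)).det := by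
  classical
  set j₀ : Fin n := (I.orderIsoOfFin hI).symm ⟨t, ht⟩ with hj₀
  have hej₀ : I.orderEmbOfFin hI j₀ = t := by
    rw [← Finset.coe_orderIsoOfFin_apply, hj₀, OrderIso.apply_symm_apply]
  have hinj : Function.Injective (fun j => I.orderEmbOfFin hI j) :=
    (I.orderEmbOfFin hI).injective
  have hiff : ∀ j, I.orderEmbOfFin hI j = t ↔ j = j₀ := by
    intro j
    constructor
    · intro h; exact hinj (h.trans hej₀.symm)
    · rintro rfl; exact hej₀
  have hsub : (Z.updateCol t fun r => Z r t + c * Z r s).submatrix id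
        (fun j => I.orderEmbOfFin hI j)
      = (Z.submatrix id (fun j => I.orderEmbOfFin hI j)).updateCol j₀
          (fun r => Z r t + c * Z r s) := by
    ext r j
    by_cases hj : j = j₀
    · subst hj
      rw [Matrix.submatrix_apply, Matrix.updateCol_apply, if_pos hej₀,
        Matrix.updateCol_apply, if_pos rfl]
      rfl
    · rw [Matrix.submatrix_apply, Matrix.updateCol_apply,
        if_neg (fun h => hj ((hiff j).1 h)), Matrix.updateCol_apply, if_neg hj,
        Matrix.submatrix_apply]
  rw [Delta_eq _ _ hI, Delta_eq _ _ hI, hsub]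
  rw [show (fun r => Z r t + c * Z r s) = (fun r => Z r t) + (fun r => c * Z r s) from rfl,
    Matrix.det_updateCol_add]
  congr 1
  · rw [show (fun r => Z r t)
        = fun r => (Z.submatrix id (fun j => I.orderEmbOfFin hI j)) r j₀ from
        funext fun r => by rw [Matrix.submatrix_apply, id, hej₀],
      Matrix.updateCol_eq_self]
  · rw [show (fun r => c * Z r s) = c • (fun r => Z r s) from rfl,
      Matrix.det_updateCol_smul]
    congr 2
    ext r j
    by_cases hj : j = j₀
    · subst hj
      rw [Matrix.updateCol_apply, if_pos rfl, Matrix.submatrix_apply, if_pos hej₀]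
      rfl
    · rw [Matrix.updateCol_apply, if_neg hj, Matrix.submatrix_apply,
        Matrix.submatrix_apply, if_neg (fun h => hj ((hiff j).1 h))]

lemma d2det (Z : Matrix (Fin n) (Fin (2*n)) ℝ) (s t : Fin (2*n))
    (I : Finset (Fin (2*n))) (hI : I.card = n) (ht : t ∈ I) (hs : s ∈ I) (hst : s ≠ t) :
    (Z.submatrix id (fun j =>
        if I.orderEmbOfFin hI j = t then s else I.orderEmbOfFin hI j)).det = 0 := by
  classical
  set j₀ : Fin n := (I.orderIsoOfFin hI).symm ⟨t, ht⟩ with hj₀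
  set j₁ : Fin n := (I.orderIsoOfFin hI).symm ⟨s, hs⟩ with hj₁
  have hej₀ : I.orderEmbOfFin hI j₀ = t := by
    rw [← Finset.coe_orderIsoOfFin_apply, hj₀, OrderIso.apply_symm_apply]
  have hej₁ : I.orderEmbOfFin hI j₁ = s := by
    rw [← Finset.coe_orderIsoOfFin_apply, hj₁, OrderIso.apply_symm_apply]
  have hne : j₁ ≠ j₀ := by
    intro h
    exact hst (by rw [← hej₁, h, hej₀])
  apply Matrix.det_zero_of_column_eq hne
  intro k
  rw [Matrix.submatrix_apply, Matrix.submatrix_apply,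
    if_neg (fun h => hst (hej₁ ▸ h)), hej₁, if_pos hej₀]

lemma g_mem (I : Finset (Fin (2*n))) (hI : I.card = n) (s t : Fin (2*n)) (ht : t ∈ I) :
    ∀ j, (if I.orderEmbOfFin hI j = t then s else I.orderEmbOfFin hI j)
      ∈ insert s (I.erase t) := by
  intro j
  by_cases h : I.orderEmbOfFin hI j = t
  · rw [if_pos h]; exact Finset.mem_insert_self s _
  · rw [if_neg h]
    exact Finset.mem_insert_of_mem (Finset.mem_erase.2 ⟨h, Finset.orderEmbOfFin_mem I hI j⟩)

lemma detB_adj (Z : Matrix (Fin n) (Fin (2*n)) ℝ) (s t : Fin (2*n)) (I : Finset (Fin (2*n)))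
    (hI : I.card = n) (ht : t ∈ I) (hs : s ∉ I)
    (hcmp : ∀ u : Fin (2*n), u ∈ I → u ≠ t → ((u:ℕ) < (s:ℕ) ↔ (u:ℕ) < (t:ℕ))) :
    (Z.submatrix id (fun j =>
        if I.orderEmbOfFin hI j = t then s else I.orderEmbOfFin hI j)).det
      = Delta Z (insert s (I.erase t)) := by
  have hI' := card_insert_erase hI ht hs
  rw [Delta_eq _ _ hI']
  have hmono : StrictMono (fun j =>
      if I.orderEmbOfFin hI j = t then s else I.orderEmbOfFin hI j) := by
    intro j j' hjj
    have hee : (I.orderEmbOfFin hI j : ℕ) < (I.orderEmbOfFin hI j' : ℕ) :=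
      (I.orderEmbOfFin hI).strictMono hjj
    simp only
    have hmem := Finset.orderEmbOfFin_mem I hI j
    have hmem' := Finset.orderEmbOfFin_mem I hI j'
    by_cases h1 : I.orderEmbOfFin hI j = t <;> by_cases h2 : I.orderEmbOfFin hI j' = t
    · exfalso
      have hj := (I.orderEmbOfFin hI).injective (h1.trans h2.symm)
      subst hj
      exact lt_irrefl _ hjj
    · rw [if_pos h1, if_neg h2]
      have hiff := hcmp _ hmem' h2
      have hnev : (I.orderEmbOfFin hI j' : ℕ) ≠ (s:ℕ) :=
        fun h => hs ((Fin.ext h : I.orderEmbOfFin hI j' = s) ▸ hmem')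
      rw [Fin.lt_def]
      have h1v : (I.orderEmbOfFin hI j : ℕ) = (t:ℕ) := congrArg Fin.val h1
      omega
    · rw [if_neg h1, if_pos h2]
      have hiff := hcmp _ hmem h1
      have hnev : (I.orderEmbOfFin hI j : ℕ) ≠ (s:ℕ) :=
        fun h => hs ((Fin.ext h : I.orderEmbOfFin hI j = s) ▸ hmem)
      rw [Fin.lt_def]
      have h2v : (I.orderEmbOfFin hI j' : ℕ) = (t:ℕ) := congrArg Fin.val h2
      omega
    · rw [if_neg h1, if_neg h2]
      exact Fin.lt_def.2 hee
  exact congrArg (fun f => (Z.submatrix id f).det)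
    (Finset.orderEmbOfFin_unique hI' (g_mem I hI s t ht) hmono)


lemma detB_wrapx (Z : Matrix (Fin n) (Fin (2*n)) ℝ) (s t : Fin (2*n)) (I : Finset (Fin (2*n)))
    (hI : I.card = n) (ht : t ∈ I) (hs : s ∉ I) (ht0 : (t:ℕ) = 0)
    (hsmax : (s:ℕ) = 2*n - 1) :
    (Z.submatrix id (fun j =>
        if I.orderEmbOfFin hI j = t then s else I.orderEmbOfFin hI j)).det
      = (-1:ℝ)^(n-1) * Delta Z (insert s (I.erase t)) := by
  have hn : 0 < n := hI ▸ Finset.card_pos.2 ⟨t, ht⟩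
  obtain ⟨m, rfl⟩ : ∃ m, n = m + 1 := ⟨n - 1, by omega⟩
  have hI' := card_insert_erase hI ht hs
  set j₀ : Fin (m+1) := (I.orderIsoOfFin hI).symm ⟨t, ht⟩ with hj₀
  have hej₀ : I.orderEmbOfFin hI j₀ = t := by
    rw [← Finset.coe_orderIsoOfFin_apply, hj₀, OrderIso.apply_symm_apply]
  have hiff : ∀ k, I.orderEmbOfFin hI k = t ↔ k = j₀ := by
    intro k
    constructor
    · intro h; exact (I.orderEmbOfFin hI).injective (h.trans hej₀.symm)
    · rintro rfl; exact hej₀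
  have hj₀0 : (j₀ : ℕ) = 0 := by
    by_contra hne
    have h0 : (0 : Fin (m+1)) < j₀ := Fin.pos_of_ne_zero (fun h => hne (by rw [h]; rfl))
    have hlt := Fin.lt_def.1 ((I.orderEmbOfFin hI).strictMono h0)
    have hv : (I.orderEmbOfFin hI j₀ : ℕ) = (t:ℕ) := congrArg Fin.val hej₀
    omega
  have hmono : StrictMono (fun j : Fin (m+1) =>
      if I.orderEmbOfFin hI (finRotate (m+1) j) = t then s
      else I.orderEmbOfFin hI (finRotate (m+1) j)) := by
    intro j j' hjj
    have hjv := Fin.lt_def.1 hjj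
    have hjlt := j.isLt
    have hjlt' := j'.isLt
    simp only
    by_cases hl' : j' = Fin.last m
    · have hfr' : (finRotate (m+1) j' : ℕ) = 0 := by rw [coe_finRotate, if_pos hl']
      have hfr'j₀ : finRotate (m+1) j' = j₀ := Fin.ext (by omega)
      rw [if_pos ((hiff _).2 hfr'j₀)]
      have hjne : j ≠ Fin.last m := by
        intro h
        rw [h, hl'] at hjv
        exact lt_irrefl _ hjv
      have hfr : (finRotate (m+1) j : ℕ) = (j:ℕ) + 1 := by rw [coe_finRotate, if_neg hjne]
      have hfrne : finRotate (m+1) j ≠ j₀ := by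
        intro h; have := congrArg Fin.val h; omega
      rw [if_neg (fun h => hfrne ((hiff _).1 h))]
      have hmem := Finset.orderEmbOfFin_mem I hI (finRotate (m+1) j)
      have hnes : I.orderEmbOfFin hI (finRotate (m+1) j) ≠ s := fun h => hs (h ▸ hmem)
      have hneq : (I.orderEmbOfFin hI (finRotate (m+1) j) : ℕ) ≠ (s:ℕ) :=
        fun h => hnes (Fin.ext h)
      have hbl := (I.orderEmbOfFin hI (finRotate (m+1) j)).isLt
      rw [Fin.lt_def]
      omega
    · have hjne : j ≠ Fin.last m := by
        intro h
        subst h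
        have := Fin.le_last j'
        exact absurd hjj (by rw [Fin.lt_def]; have := Fin.lt_def.1 (lt_of_le_of_ne this hl'); omega)
      have hfr : (finRotate (m+1) j : ℕ) = (j:ℕ) + 1 := by rw [coe_finRotate, if_neg hjne]
      have hfr' : (finRotate (m+1) j' : ℕ) = (j':ℕ) + 1 := by rw [coe_finRotate, if_neg hl']
      have hfrne : finRotate (m+1) j ≠ j₀ := by
        intro h; have := congrArg Fin.val h; omega
      have hfrne' : finRotate (m+1) j' ≠ j₀ := by
        intro h; have := congrArg Fin.val h; omega
      rw [if_neg (fun h => hfrne ((hiff _).1 h)), if_neg (fun h => hfrne' ((hiff _).1 h))]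
      exact (I.orderEmbOfFin hI).strictMono (Fin.lt_def.2 (by omega))
  have huniq := Finset.orderEmbOfFin_unique hI'
    (fun j => g_mem I hI s t ht (finRotate (m+1) j)) hmono
  have hg : (fun j => if I.orderEmbOfFin hI j = t then s else I.orderEmbOfFin hI j)
      = fun j => (insert s (I.erase t)).orderEmbOfFin hI' ((finRotate (m+1))⁻¹ j) := by
    funext j
    rw [← huniq]
    simp only [Equiv.Perm.inv_def, Equiv.apply_symm_apply]
  rw [hg]
  rw [show (Z.submatrix id fun j =>
        (insert s (I.erase t)).orderEmbOfFin hI' ((finRotate (m+1))⁻¹ j))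
      = (Z.submatrix id (fun j => (insert s (I.erase t)).orderEmbOfFin hI' j)).submatrix id
          ⇑(finRotate (m+1))⁻¹ from rfl]
  rw [Matrix.det_permute' ((finRotate (m+1))⁻¹) _, ← Delta_eq _ _ hI']
  congr 1
  have hsgn : Equiv.Perm.sign ((finRotate (m+1))⁻¹) = (-1)^m := by
    rw [map_inv, sign_finRotate]
    exact inv_eq_of_mul_eq_one_left (by rw [← pow_add]; exact Even.neg_one_pow ⟨m, rfl⟩)
  rw [hsgn]
  push_cast
  norm_num

lemma detB_wrapy (Z : Matrix (Fin n) (Fin (2*n)) ℝ) (s t : Fin (2*n)) (I : Finset (Fin (2*n)))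
    (hI : I.card = n) (ht : t ∈ I) (hs : s ∉ I) (htmax : (t:ℕ) = 2*n - 1)
    (hs0 : (s:ℕ) = 0) :
    (Z.submatrix id (fun j =>
        if I.orderEmbOfFin hI j = t then s else I.orderEmbOfFin hI j)).det
      = (-1:ℝ)^(n-1) * Delta Z (insert s (I.erase t)) := by
  have hn : 0 < n := hI ▸ Finset.card_pos.2 ⟨t, ht⟩
  obtain ⟨m, rfl⟩ : ∃ m, n = m + 1 := ⟨n - 1, by omega⟩
  have hI' := card_insert_erase hI ht hs
  set j₀ : Fin (m+1) := (I.orderIsoOfFin hI).symm ⟨t, ht⟩ with hj₀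
  have hej₀ : I.orderEmbOfFin hI j₀ = t := by
    rw [← Finset.coe_orderIsoOfFin_apply, hj₀, OrderIso.apply_symm_apply]
  have hiff : ∀ k, I.orderEmbOfFin hI k = t ↔ k = j₀ := by
    intro k
    constructor
    · intro h; exact (I.orderEmbOfFin hI).injective (h.trans hej₀.symm)
    · rintro rfl; exact hej₀
  have hj₀l : (j₀ : ℕ) = m := by
    by_contra hne
    have h0 : j₀ < Fin.last m := lt_of_le_of_ne (Fin.le_last j₀)
      (fun h => hne (by rw [h]; rfl))
    have hlt := Fin.lt_def.1 ((I.orderEmbOfFin hI).strictMono h0)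
    have hv : (I.orderEmbOfFin hI j₀ : ℕ) = (t:ℕ) := congrArg Fin.val hej₀
    have hbl := (I.orderEmbOfFin hI (Fin.last m)).isLt
    omega
  have hπ : ∀ j : Fin (m+1), ((finRotate (m+1))⁻¹ j : ℕ)
      = if (j:ℕ) = 0 then m else (j:ℕ) - 1 := by
    intro j
    have h1 : (finRotate (m+1))⁻¹ j = j - 1 := by
      rw [Equiv.Perm.inv_def, Equiv.symm_apply_eq, finRotate_succ_apply, sub_add_cancel]
    rw [h1, Fin.coe_sub_one]
    by_cases h : j = 0
    · rw [if_pos h, if_pos (by rw [h]; rfl)]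
    · rw [if_neg h, if_neg (fun hv => h (Fin.ext (by rw [hv, Fin.val_zero])))]
  have hmono : StrictMono (fun j : Fin (m+1) =>
      if I.orderEmbOfFin hI ((finRotate (m+1))⁻¹ j) = t then s
      else I.orderEmbOfFin hI ((finRotate (m+1))⁻¹ j)) := by
    intro j j' hjj
    have hjv := Fin.lt_def.1 hjj
    have hjlt := j.isLt
    have hjlt' := j'.isLt
    simp only
    have hπj := hπ j
    have hπj' := hπ j'
    by_cases h0 : (j:ℕ) = 0
    · have hπj0 : ((finRotate (m+1))⁻¹ j : ℕ) = m := by rw [hπj, if_pos h0]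
      have hπj'v : ((finRotate (m+1))⁻¹ j' : ℕ) = (j':ℕ) - 1 := by
        rw [hπj', if_neg (by omega)]
      have hfrj₀ : (finRotate (m+1))⁻¹ j = j₀ := Fin.ext (by omega)
      rw [if_pos ((hiff _).2 hfrj₀)]
      have hfrne' : (finRotate (m+1))⁻¹ j' ≠ j₀ := by
        intro h; have := congrArg Fin.val h; omega
      rw [if_neg (fun h => hfrne' ((hiff _).1 h))]
      have hmem := Finset.orderEmbOfFin_mem I hI ((finRotate (m+1))⁻¹ j')
      have hnes : I.orderEmbOfFin hI ((finRotate (m+1))⁻¹ j') ≠ s := fun h => hs (h ▸ hmem)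
      have hneq : (I.orderEmbOfFin hI ((finRotate (m+1))⁻¹ j') : ℕ) ≠ (s:ℕ) :=
        fun h => hnes (Fin.ext h)
      rw [Fin.lt_def]
      omega
    · have hπjv : ((finRotate (m+1))⁻¹ j : ℕ) = (j:ℕ) - 1 := by rw [hπj, if_neg h0]
      have hπj'v : ((finRotate (m+1))⁻¹ j' : ℕ) = (j':ℕ) - 1 := by
        rw [hπj', if_neg (by omega)]
      have hfrne : (finRotate (m+1))⁻¹ j ≠ j₀ := by
        intro h; have := congrArg Fin.val h; omega
      have hfrne' : (finRotate (m+1))⁻¹ j' ≠ j₀ := by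
        intro h; have := congrArg Fin.val h; omega
      rw [if_neg (fun h => hfrne ((hiff _).1 h)), if_neg (fun h => hfrne' ((hiff _).1 h))]
      exact (I.orderEmbOfFin hI).strictMono (Fin.lt_def.2 (by omega))
  have huniq := Finset.orderEmbOfFin_unique hI'
    (fun j => g_mem I hI s t ht ((finRotate (m+1))⁻¹ j)) hmono
  have hg : (fun j => if I.orderEmbOfFin hI j = t then s else I.orderEmbOfFin hI j)
      = fun j => (insert s (I.erase t)).orderEmbOfFin hI' (finRotate (m+1) j) := by
    funext j
    rw [← huniq]
    simp only [Equiv.Perm.inv_def, Equiv.symm_apply_apply]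
  rw [hg]
  rw [show (Z.submatrix id fun j =>
        (insert s (I.erase t)).orderEmbOfFin hI' (finRotate (m+1) j))
      = (Z.submatrix id (fun j => (insert s (I.erase t)).orderEmbOfFin hI' j)).submatrix id
          ⇑(finRotate (m+1)) from rfl]
  rw [Matrix.det_permute' (finRotate (m+1)) _, ← Delta_eq _ _ hI']
  congr 1
  rw [sign_finRotate]
  push_cast
  norm_num


lemma bridge_nonneg (hn : 0 < n) (Z : Matrix (Fin n) (Fin (2*n)) ℝ)
    (hZ : ∀ I, I.card = n → 0 ≤ Delta Z I) (a : ℝ) (ha : 0 ≤ a) (s t : Fin (2*n)) (c : ℝ)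
    (hconf : ((t:ℕ) = (s:ℕ)+1 ∧ c = a) ∨ ((s:ℕ) = (t:ℕ)+1 ∧ c = a)
         ∨ ((t:ℕ) = 0 ∧ (s:ℕ) = 2*n-1 ∧ c = (-1:ℝ)^(n-1)*a)
         ∨ ((t:ℕ) = 2*n-1 ∧ (s:ℕ) = 0 ∧ c = (-1:ℝ)^(n-1)*a)) :
    ∀ I, I.card = n → 0 ≤ Delta (Z * (1 + Matrix.single s t c)) I := by
  intro I hI
  rw [mul_one_add_std]
  by_cases ht : t ∈ I
  · by_cases hs : s ∈ I
    · have hst : s ≠ t := by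
        intro h
        have hv := congrArg Fin.val h
        have hsl := s.isLt
        rcases hconf with ⟨h1,_⟩|⟨h1,_⟩|⟨h1,h2,_⟩|⟨h1,h2,_⟩ <;> omega
      rw [d3 Z s t c I hI ht, d2det Z s t I hI ht hs hst, mul_zero, add_zero]
      exact hZ I hI
    · rw [d3 Z s t c I hI ht]
      have hpos := hZ _ (card_insert_erase hI ht hs)
      rcases hconf with ⟨h1,hc⟩|⟨h1,hc⟩|⟨h1,h2,hc⟩|⟨h1,h2,hc⟩
      · rw [detB_adj Z s t I hI ht hs (fun u hu hut => by
          have h1' : (u:ℕ) ≠ (s:ℕ) := fun h => hs ((Fin.ext h : u = s) ▸ hu)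
          have h2' : (u:ℕ) ≠ (t:ℕ) := fun h => hut (Fin.ext h)
          omega)]
        exact add_nonneg (hZ I hI) (mul_nonneg (hc ▸ ha) hpos)
      · rw [detB_adj Z s t I hI ht hs (fun u hu hut => by
          have h1' : (u:ℕ) ≠ (s:ℕ) := fun h => hs ((Fin.ext h : u = s) ▸ hu)
          have h2' : (u:ℕ) ≠ (t:ℕ) := fun h => hut (Fin.ext h)
          omega)]
        exact add_nonneg (hZ I hI) (mul_nonneg (hc ▸ ha) hpos)
      · rw [detB_wrapx Z s t I hI ht hs h1 h2, hc]
        have hsq : (-1:ℝ)^(n-1) * (-1:ℝ)^(n-1) = 1 := by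
          rw [← pow_add]; exact Even.neg_one_pow ⟨n-1, rfl⟩
        have heq : (-1:ℝ)^(n-1)*a * ((-1:ℝ)^(n-1) * Delta Z (insert s (I.erase t)))
            = a * Delta Z (insert s (I.erase t)) := by
          calc (-1:ℝ)^(n-1)*a * ((-1:ℝ)^(n-1) * Delta Z (insert s (I.erase t)))
              = ((-1:ℝ)^(n-1)*(-1:ℝ)^(n-1)) * (a * Delta Z (insert s (I.erase t))) := by ring
            _ = a * Delta Z (insert s (I.erase t)) := by rw [hsq, one_mul]
        rw [heq]
        exact add_nonneg (hZ I hI) (mul_nonneg ha hpos)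
      · rw [detB_wrapy Z s t I hI ht hs h1 h2, hc]
        have hsq : (-1:ℝ)^(n-1) * (-1:ℝ)^(n-1) = 1 := by
          rw [← pow_add]; exact Even.neg_one_pow ⟨n-1, rfl⟩
        have heq : (-1:ℝ)^(n-1)*a * ((-1:ℝ)^(n-1) * Delta Z (insert s (I.erase t)))
            = a * Delta Z (insert s (I.erase t)) := by
          calc (-1:ℝ)^(n-1)*a * ((-1:ℝ)^(n-1) * Delta Z (insert s (I.erase t)))
              = ((-1:ℝ)^(n-1)*(-1:ℝ)^(n-1)) * (a * Delta Z (insert s (I.erase t))) := by ring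
            _ = a * Delta Z (insert s (I.erase t)) := by rw [hsq, one_mul]
        rw [heq]
        exact add_nonneg (hZ I hI) (mul_nonneg ha hpos)
  · rw [d1 Z t _ I hI ht]
    exact hZ I hI

lemma xstep (hn : 0 < n) (Z : Matrix (Fin n) (Fin (2*n)) ℝ)
    (hZ : ∀ I, I.card = n → 0 ≤ Delta Z I) (a : ℝ) (ha : 0 ≤ a) (i : Fin (2*n)) :
    ∀ I, I.card = n → 0 ≤ Delta (Z * xMat n i a) I := by
  intro I hI
  rw [xMat_eq]
  refine bridge_nonneg hn Z hZ a ha i (nxt n i) (xcoef n i a) ?_ I hI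
  obtain ⟨hni, hnv⟩ | ⟨hni, hnv⟩ := nxt_spec n i
  · exact Or.inl ⟨hnv, if_pos hni⟩
  · refine Or.inr (Or.inr (Or.inl ⟨hnv, by omega, if_neg (by omega)⟩))

lemma ystep (hn : 0 < n) (Z : Matrix (Fin n) (Fin (2*n)) ℝ)
    (hZ : ∀ I, I.card = n → 0 ≤ Delta Z I) (a : ℝ) (ha : 0 ≤ a) (i : Fin (2*n)) :
    ∀ I, I.card = n → 0 ≤ Delta (Z * yMat n i a) I := by
  intro I hI
  rw [yMat_eq]
  refine bridge_nonneg hn Z hZ a ha (nxt n i) i (xcoef n i a) ?_ I hI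
  obtain ⟨hni, hnv⟩ | ⟨hni, hnv⟩ := nxt_spec n i
  · exact Or.inr (Or.inl ⟨hnv, if_pos hni⟩)
  · refine Or.inr (Or.inr (Or.inr ⟨by omega, hnv, if_neg (by omega)⟩))

end Minors

/-- Adding a pair of symmetric bridges preserves the totally nonnegative
Lagrangian Grassmannian: if `X·R·Xᵀ = 0` and all maximal minors of `X` are
nonnegative, then the same holds for `Y = X·x_i(a)·y_{i+n}(a)` for any `a > 0`. -/
theorem stmt10 (n : ℕ) (X : Matrix (Fin n) (Fin (2*n)) ℝ)
    (hlag : X * Rmat n * Xᵀ = 0)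
    (htnn : ∀ I : Finset (Fin (2*n)), I.card = n → 0 ≤ Delta X I)
    (a : ℝ) (ha : 0 < a) (i : Fin (2*n)) :
    (X * xMat n i a * yMat n (rotIdx n i) a) * Rmat n *
        (X * xMat n i a * yMat n (rotIdx n i) a)ᵀ = 0 ∧
      ∀ I : Finset (Fin (2*n)), I.card = n →
        0 ≤ Delta (X * xMat n i a * yMat n (rotIdx n i) a) I := by

  have hn : 0 < n := by have := i.isLt; omega
  constructor
  · exact symp n hn X hlag i a
  · exact ystep hn (X * xMat n i a) (xstep hn X htnn a ha.le i) a ha.le (rotIdx n i)
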